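/- Let (x^m) be a sequence in l(r,s,t,p;Δ) with 1 < p_n ≤ M, equipped with the Luxemburg norm. Then: (i) ‖x^m‖ → 1 implies σ_p(x^m) → 1; (ii) ‖x^m‖ → 0 if and only if σ_p(x^m) → 0. -/

import Mathlib

open Finset Filter Topology ENNReal

/-- The difference operator `Δ` with the convention `x₋₁ = 0`. -/
def del (x : ℕ → ℝ) (k : ℕ) : ℝ :=
  x k - if k = 0 then 0 else x (k - 1)

/-- The generalized-means-of-differences transform `(A(r,s,t)·Δ)x`. -/
noncomputable def Amap (r s t : ℕ → ℝ) (x : ℕ → ℝ) (n : ℕ) : ℝ :=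
  (1 / r n) * ∑ k ∈ Finset.range (n + 1), s (n - k) * t k * del x k

/-- The modular `σ_p` on `l(r,s,t,p;Δ)`, with values in `[0,∞]`. -/
noncomputable def sigmaP (r s t p : ℕ → ℝ) (x : ℕ → ℝ) : ℝ≥0∞ :=
  ∑' n, ENNReal.ofReal (|Amap r s t x n| ^ p n)

/-- The space `l(r,s,t,p;Δ)`. -/
def lrstp (r s t p : ℕ → ℝ) : Set (ℕ → ℝ) :=
  {x | sigmaP r s t p x < ⊤}

/-- The paranorm `h̃` on `l(r,s,t,p;Δ)`. -/
noncomputable def htilde (r s t p : ℕ → ℝ) (M : ℝ) (x : ℕ → ℝ) : ℝ :=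
  ((sigmaP r s t p x).toReal) ^ (1 / M)

/-- The Luxemburg norm on `l(r,s,t,p;Δ)`. -/
noncomputable def lux (r s t p : ℕ → ℝ) (x : ℕ → ℝ) : ℝ :=
  sInf {c : ℝ | 0 < c ∧ sigmaP r s t p (c⁻¹ • x) ≤ 1}

lemma del_smul (c : ℝ) (x : ℕ → ℝ) (k : ℕ) : del (c • x) k = c * del x k := by
  simp only [del, Pi.smul_apply, smul_eq_mul]
  split_ifs <;> ring

lemma Amap_smul (r s t : ℕ → ℝ) (c : ℝ) (x : ℕ → ℝ) (n : ℕ) :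
    Amap r s t (c • x) n = c * Amap r s t x n := by
  simp only [Amap, del_smul]
  have h : ∑ k ∈ Finset.range (n+1), s (n-k) * t k * (c * del x k)
      = c * ∑ k ∈ Finset.range (n+1), s (n-k) * t k * del x k := by
    rw [Finset.mul_sum]
    exact Finset.sum_congr rfl (fun k _ => by ring)
  rw [h]; ring

lemma sigmaP_inv_smul (r s t p : ℕ → ℝ) (x : ℕ → ℝ) (c : ℝ) (hc : 0 < c) :
    sigmaP r s t p (c⁻¹ • x) =
      ∑' n, ENNReal.ofReal (c⁻¹ ^ p n * |Amap r s t x n| ^ p n) := by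
  unfold sigmaP
  congr 1; funext n
  rw [Amap_smul, abs_mul, abs_of_pos (inv_pos.mpr hc),
      Real.mul_rpow (le_of_lt (inv_pos.mpr hc)) (abs_nonneg _)]

lemma sigmaP_inv_smul_le (r s t p : ℕ → ℝ) (x : ℕ → ℝ) (c B : ℝ) (hc : 0 < c)
    (hB : ∀ n, c⁻¹ ^ p n ≤ B) :
    sigmaP r s t p (c⁻¹ • x) ≤ ENNReal.ofReal B * sigmaP r s t p x := by
  rw [sigmaP_inv_smul r s t p x c hc]
  unfold sigmaP
  rw [← ENNReal.tsum_mul_left]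
  refine ENNReal.tsum_le_tsum fun n => ?_
  rw [← ENNReal.ofReal_mul (le_trans (Real.rpow_nonneg (inv_nonneg.mpr hc.le) _) (hB 0))]
  exact ENNReal.ofReal_le_ofReal
    (mul_le_mul_of_nonneg_right (hB n) (Real.rpow_nonneg (abs_nonneg _) _))

lemma le_sigmaP_inv_smul (r s t p : ℕ → ℝ) (x : ℕ → ℝ) (c b : ℝ) (hc : 0 < c) (hb : 0 ≤ b)
    (hb' : ∀ n, b ≤ c⁻¹ ^ p n) :
    ENNReal.ofReal b * sigmaP r s t p x ≤ sigmaP r s t p (c⁻¹ • x) := by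
  rw [sigmaP_inv_smul r s t p x c hc]
  unfold sigmaP
  rw [← ENNReal.tsum_mul_left]
  refine ENNReal.tsum_le_tsum fun n => ?_
  rw [← ENNReal.ofReal_mul hb]
  exact ENNReal.ofReal_le_ofReal
    (mul_le_mul_of_nonneg_right (hb' n) (Real.rpow_nonneg (abs_nonneg _) _))

lemma lux_nonneg (r s t p : ℕ → ℝ) (x : ℕ → ℝ) : 0 ≤ lux r s t p x :=
  Real.sInf_nonneg (fun _ hc => hc.1.le)

lemma lux_bddBelow (r s t p : ℕ → ℝ) (x : ℕ → ℝ) :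
    BddBelow {c : ℝ | 0 < c ∧ sigmaP r s t p (c⁻¹ • x) ≤ 1} :=
  ⟨0, fun _ ha => ha.1.le⟩

lemma lux_set_nonempty (r s t p : ℕ → ℝ) (x : ℕ → ℝ) (hp1 : ∀ n, 1 < p n)
    (hσ : sigmaP r s t p x < ⊤) :
    ∃ c, c ∈ {c : ℝ | 0 < c ∧ sigmaP r s t p (c⁻¹ • x) ≤ 1} := by
  set S := (sigmaP r s t p x).toReal with hSdef
  set c := max 1 S with hcdef
  have hc1 : 1 ≤ c := le_max_left _ _
  have hc0 : 0 < c := lt_of_lt_of_le one_pos hc1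
  refine ⟨c, hc0, ?_⟩
  have hB : ∀ n, c⁻¹ ^ p n ≤ c⁻¹ := fun n => by
    calc c⁻¹ ^ p n ≤ c⁻¹ ^ (1:ℝ) :=
          Real.rpow_le_rpow_of_exponent_ge (inv_pos.mpr hc0) (inv_le_one_of_one_le₀ hc1) (hp1 n).le
      _ = c⁻¹ := Real.rpow_one _
  have hcS : c⁻¹ * S ≤ 1 := by
    have h1 : c⁻¹ * S ≤ c⁻¹ * c :=
      mul_le_mul_of_nonneg_left (le_max_right 1 S) (inv_nonneg.mpr hc0.le)
    rwa [inv_mul_cancel₀ hc0.ne'] at h1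
  calc sigmaP r s t p (c⁻¹ • x) ≤ ENNReal.ofReal c⁻¹ * sigmaP r s t p x :=
        sigmaP_inv_smul_le r s t p x c c⁻¹ hc0 hB
    _ = ENNReal.ofReal (c⁻¹ * S) := by
        rw [ENNReal.ofReal_mul (inv_nonneg.mpr hc0.le), hSdef, ENNReal.ofReal_toReal hσ.ne]
    _ ≤ 1 := ENNReal.ofReal_le_one.mpr hcS

lemma sigmaP_anti (r s t p : ℕ → ℝ) (x : ℕ → ℝ) (hp1 : ∀ n, 1 < p n)
    {c c' : ℝ} (hc : 0 < c) (hcc : c ≤ c') :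
    sigmaP r s t p (c'⁻¹ • x) ≤ sigmaP r s t p (c⁻¹ • x) := by
  have hc' : 0 < c' := lt_of_lt_of_le hc hcc
  rw [sigmaP_inv_smul r s t p x c hc, sigmaP_inv_smul r s t p x c' hc']
  refine ENNReal.tsum_le_tsum fun n => ENNReal.ofReal_le_ofReal
    (mul_le_mul_of_nonneg_right
      (Real.rpow_le_rpow (inv_nonneg.mpr hc'.le) (inv_anti₀ hc hcc)
        (by linarith [hp1 n]))
      (Real.rpow_nonneg (abs_nonneg _) _))

lemma sigma_le_one_of_lux_lt (r s t p : ℕ → ℝ) (x : ℕ → ℝ) (hp1 : ∀ n, 1 < p n)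
    (hσ : sigmaP r s t p x < ⊤) {c : ℝ} (hc0 : 0 < c) (hc : lux r s t p x < c) :
    sigmaP r s t p (c⁻¹ • x) ≤ 1 := by
  have hne := lux_set_nonempty r s t p x hp1 hσ
  have hbdd := lux_bddBelow r s t p x
  unfold lux at hc
  obtain ⟨c', hc'mem, hc'lt⟩ := (csInf_lt_iff hbdd hne).mp hc
  exact le_trans (sigmaP_anti r s t p x hp1 hc'mem.1 hc'lt.le) hc'mem.2

lemma one_lt_sigma_of_lt_lux (r s t p : ℕ → ℝ) (x : ℕ → ℝ)
    {c : ℝ} (hc0 : 0 < c) (hc : c < lux r s t p x) :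
    1 < sigmaP r s t p (c⁻¹ • x) := by
  by_contra h
  push_neg at h
  have hmem : c ∈ {c : ℝ | 0 < c ∧ sigmaP r s t p (c⁻¹ • x) ≤ 1} := ⟨hc0, h⟩
  exact absurd (csInf_le (lux_bddBelow r s t p x) hmem) (not_le.mpr hc)

/-- If `1 ≤ c` and `lux < c` then `σ ≤ c^M`. -/
lemma toReal_le_rpow (r s t p : ℕ → ℝ) (M : ℝ) (x : ℕ → ℝ) (hp1 : ∀ n, 1 < p n)
    (hpM : ∀ n, p n ≤ M) (hσ : sigmaP r s t p x < ⊤)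
    {c : ℝ} (hc1 : 1 ≤ c) (hcL : lux r s t p x < c) :
    (sigmaP r s t p x).toReal ≤ c ^ M := by
  have hc0 : 0 < c := lt_of_lt_of_le one_pos hc1
  have hb : ∀ n, c⁻¹ ^ M ≤ c⁻¹ ^ p n := fun n =>
    Real.rpow_le_rpow_of_exponent_ge (inv_pos.mpr hc0) (inv_le_one_of_one_le₀ hc1) (hpM n)
  have h1 := le_sigmaP_inv_smul r s t p x c (c⁻¹ ^ M) hc0
      (Real.rpow_nonneg (inv_nonneg.mpr hc0.le) _) hb
  have h2 := sigma_le_one_of_lux_lt r s t p x hp1 hσ hc0 hcL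
  have h3 : ENNReal.ofReal (c⁻¹ ^ M * (sigmaP r s t p x).toReal) ≤ 1 := by
    rw [ENNReal.ofReal_mul (Real.rpow_nonneg (inv_nonneg.mpr hc0.le) _),
      ENNReal.ofReal_toReal hσ.ne]
    exact le_trans h1 h2
  have h4 : c⁻¹ ^ M * (sigmaP r s t p x).toReal ≤ 1 := ENNReal.ofReal_le_one.mp h3
  have hcM : 0 < c ^ M := Real.rpow_pos_of_pos hc0 M
  rw [Real.inv_rpow hc0.le M] at h4
  have h5 : c ^ M * ((c ^ M)⁻¹ * (sigmaP r s t p x).toReal) ≤ c ^ M * 1 :=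
    mul_le_mul_of_nonneg_left h4 hcM.le
  rwa [← mul_assoc, mul_inv_cancel₀ hcM.ne', one_mul, mul_one] at h5

/-- If `0 < c ≤ 1` and `c < lux` then `c^M ≤ σ`. -/
lemma rpow_le_toReal (r s t p : ℕ → ℝ) (M : ℝ) (x : ℕ → ℝ)
    (hpM : ∀ n, p n ≤ M) (hσ : sigmaP r s t p x < ⊤)
    {c : ℝ} (hc0 : 0 < c) (hc1 : c ≤ 1) (hcL : c < lux r s t p x) :
    c ^ M ≤ (sigmaP r s t p x).toReal := by
  have hinv1 : 1 ≤ c⁻¹ := (one_le_inv₀ hc0).mpr hc1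
  have hB : ∀ n, c⁻¹ ^ p n ≤ c⁻¹ ^ M := fun n =>
    Real.rpow_le_rpow_of_exponent_le hinv1 (hpM n)
  have h1 := sigmaP_inv_smul_le r s t p x c (c⁻¹ ^ M) hc0 hB
  have h2 := one_lt_sigma_of_lt_lux r s t p x hc0 hcL
  have h3 : (1 : ℝ≥0∞) < ENNReal.ofReal (c⁻¹ ^ M * (sigmaP r s t p x).toReal) := by
    rw [ENNReal.ofReal_mul (Real.rpow_nonneg (inv_nonneg.mpr hc0.le) _),
      ENNReal.ofReal_toReal hσ.ne]
    exact lt_of_lt_of_le h2 h1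
  have h4 : 1 < c⁻¹ ^ M * (sigmaP r s t p x).toReal := by
    by_contra h
    push_neg at h
    exact absurd (ENNReal.ofReal_le_one.mpr h) (not_le.mpr h3)
  have hcM : 0 < c ^ M := Real.rpow_pos_of_pos hc0 M
  rw [Real.inv_rpow hc0.le M] at h4
  have h5 : c ^ M * 1 ≤ c ^ M * ((c ^ M)⁻¹ * (sigmaP r s t p x).toReal) :=
    mul_le_mul_of_nonneg_left h4.le hcM.le
  rwa [← mul_assoc, mul_inv_cancel₀ hcM.ne', one_mul, mul_one] at h5

/-- If `0 < c ≤ 1` and `lux < c` then `σ ≤ c`. -/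
lemma toReal_le_of_lux_lt (r s t p : ℕ → ℝ) (x : ℕ → ℝ) (hp1 : ∀ n, 1 < p n)
    (hσ : sigmaP r s t p x < ⊤)
    {c : ℝ} (hc0 : 0 < c) (hc1 : c ≤ 1) (hcL : lux r s t p x < c) :
    (sigmaP r s t p x).toReal ≤ c := by
  have hinv1 : 1 ≤ c⁻¹ := (one_le_inv₀ hc0).mpr hc1
  have hb : ∀ n, c⁻¹ ≤ c⁻¹ ^ p n := fun n => by
    calc c⁻¹ = c⁻¹ ^ (1:ℝ) := (Real.rpow_one _).symm
      _ ≤ c⁻¹ ^ p n := Real.rpow_le_rpow_of_exponent_le hinv1 (hp1 n).le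
  have h1 := le_sigmaP_inv_smul r s t p x c c⁻¹ hc0 (inv_nonneg.mpr hc0.le) hb
  have h2 := sigma_le_one_of_lux_lt r s t p x hp1 hσ hc0 hcL
  have h3 : ENNReal.ofReal (c⁻¹ * (sigmaP r s t p x).toReal) ≤ 1 := by
    rw [ENNReal.ofReal_mul (inv_nonneg.mpr hc0.le), ENNReal.ofReal_toReal hσ.ne]
    exact le_trans h1 h2
  have h4 : c⁻¹ * (sigmaP r s t p x).toReal ≤ 1 := ENNReal.ofReal_le_one.mp h3
  have h5 : c * (c⁻¹ * (sigmaP r s t p x).toReal) ≤ c * 1 :=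
    mul_le_mul_of_nonneg_left h4 hc0.le
  rwa [← mul_assoc, mul_inv_cancel₀ hc0.ne', one_mul, mul_one] at h5

/-- If `σ ≤ 1` then `lux ≤ σ^(1/M)`. -/
lemma lux_le_rpow (r s t p : ℕ → ℝ) (M : ℝ) (x : ℕ → ℝ) (hp1 : ∀ n, 1 < p n)
    (hpM : ∀ n, p n ≤ M) (hσ : sigmaP r s t p x < ⊤)
    (hS1 : (sigmaP r s t p x).toReal ≤ 1) :
    lux r s t p x ≤ ((sigmaP r s t p x).toReal) ^ (1/M) := by
  have hM1 : 1 < M := lt_of_lt_of_le (hp1 0) (hpM 0)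
  have hM0 : 0 < M := by linarith
  set S := (sigmaP r s t p x).toReal with hSdef
  have hS0 : 0 ≤ S := ENNReal.toReal_nonneg
  rcases eq_or_lt_of_le hS0 with hS0' | hS0'
  · -- S = 0
    have hzero : S ^ (1/M) = 0 := by
      rw [← hS0', Real.zero_rpow (by positivity)]
    rw [hzero]
    refine le_of_forall_pos_le_add fun ε hε => ?_
    set c := min 1 ε with hcdef
    have hc0 : 0 < c := lt_min one_pos hε
    have hc1 : c ≤ 1 := min_le_left _ _
    have hσ0 : sigmaP r s t p x = 0 := by
      rw [← ENNReal.ofReal_toReal hσ.ne, ← hSdef, ← hS0', ENNReal.ofReal_zero]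
    have hmem : c ∈ {c : ℝ | 0 < c ∧ sigmaP r s t p (c⁻¹ • x) ≤ 1} := by
      refine ⟨hc0, ?_⟩
      have hB : ∀ n, c⁻¹ ^ p n ≤ c⁻¹ ^ M := fun n =>
        Real.rpow_le_rpow_of_exponent_le ((one_le_inv₀ hc0).mpr hc1) (hpM n)
      calc sigmaP r s t p (c⁻¹ • x) ≤ ENNReal.ofReal (c⁻¹ ^ M) * sigmaP r s t p x :=
            sigmaP_inv_smul_le r s t p x c (c⁻¹ ^ M) hc0 hB
        _ = 0 := by rw [hσ0, mul_zero]
        _ ≤ 1 := zero_le_one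
    calc lux r s t p x ≤ c := csInf_le (lux_bddBelow r s t p x) hmem
      _ ≤ ε := min_le_right _ _
      _ = 0 + ε := (zero_add ε).symm
  · -- S > 0
    set c := S ^ (1/M) with hcdef
    have hc0 : 0 < c := Real.rpow_pos_of_pos hS0' _
    have hc1 : c ≤ 1 := Real.rpow_le_one hS0 hS1 (by positivity)
    have hcM : c ^ M = S := by
      rw [hcdef, ← Real.rpow_mul hS0, one_div_mul_cancel hM0.ne', Real.rpow_one]
    have hmem : c ∈ {c : ℝ | 0 < c ∧ sigmaP r s t p (c⁻¹ • x) ≤ 1} := by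
      refine ⟨hc0, ?_⟩
      have hB : ∀ n, c⁻¹ ^ p n ≤ c⁻¹ ^ M := fun n =>
        Real.rpow_le_rpow_of_exponent_le ((one_le_inv₀ hc0).mpr hc1) (hpM n)
      calc sigmaP r s t p (c⁻¹ • x) ≤ ENNReal.ofReal (c⁻¹ ^ M) * sigmaP r s t p x :=
            sigmaP_inv_smul_le r s t p x c (c⁻¹ ^ M) hc0 hB
        _ = ENNReal.ofReal (c⁻¹ ^ M * S) := by
            rw [← ENNReal.ofReal_toReal hσ.ne, ← hSdef,
              ← ENNReal.ofReal_mul (Real.rpow_nonneg (inv_nonneg.mpr hc0.le) _)]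
        _ ≤ 1 := by
            rw [Real.inv_rpow hc0.le, hcM, inv_mul_cancel₀ hS0'.ne', ENNReal.ofReal_one]
    exact csInf_le (lux_bddBelow r s t p x) hmem

/-- If `lux < 1` then `σ ≤ lux`. -/
lemma toReal_le_lux (r s t p : ℕ → ℝ) (x : ℕ → ℝ) (hp1 : ∀ n, 1 < p n)
    (hσ : sigmaP r s t p x < ⊤) (hL1 : lux r s t p x < 1) :
    (sigmaP r s t p x).toReal ≤ lux r s t p x := by
  have hL0 : 0 ≤ lux r s t p x := lux_nonneg r s t p x
  refine le_of_forall_pos_le_add fun ε hε => ?_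
  set c := min 1 (lux r s t p x + ε) with hcdef
  have hc0 : 0 < c := lt_min one_pos (by linarith)
  have hc1 : c ≤ 1 := min_le_left _ _
  have hcL : lux r s t p x < c := lt_min hL1 (by linarith)
  calc (sigmaP r s t p x).toReal ≤ c := toReal_le_of_lux_lt r s t p x hp1 hσ hc0 hc1 hcL
    _ ≤ lux r s t p x + ε := min_le_right _ _

theorem lux_tendsto_iff_modular
    (r s t p : ℕ → ℝ) (hr : ∀ n, r n ≠ 0) (ht : ∀ n, t n ≠ 0) (hs0 : s 0 ≠ 0)
    (M : ℝ) (hp : ∀ n, 1 < p n) (hpM : ∀ n, p n ≤ M)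
    (xs : ℕ → ℕ → ℝ) (hxs : ∀ m, xs m ∈ lrstp r s t p) :
    (Tendsto (fun m => lux r s t p (xs m)) atTop (𝓝 1) →
      Tendsto (fun m => (sigmaP r s t p (xs m)).toReal) atTop (𝓝 1)) ∧
    (Tendsto (fun m => lux r s t p (xs m)) atTop (𝓝 0) ↔
      Tendsto (fun m => (sigmaP r s t p (xs m)).toReal) atTop (𝓝 0)) := by
  have hM1 : 1 < M := lt_of_lt_of_le (hp 0) (hpM 0)
  have hM0 : 0 < M := by linarith
  have hσ : ∀ m, sigmaP r s t p (xs m) < ⊤ := hxs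
  refine ⟨?_, ?_, ?_⟩
  · -- lux → 1 implies σ → 1
    intro hL
    rw [Metric.tendsto_atTop] at hL ⊢
    intro ε hε
    set e := min (ε/2) 2⁻¹ with hedef
    have he0 : 0 < e := lt_min (by linarith) (by norm_num)
    have heε : e ≤ ε/2 := min_le_left _ _
    have he2 : e ≤ 2⁻¹ := min_le_right _ _
    set a := (1 + e) ^ (1/M) with hadef
    set b := (1 - e) ^ (1/M) with hbdef
    have h1e : (0:ℝ) < 1 + e := by linarith
    have h1e' : (0:ℝ) < 1 - e := by
      have : (2:ℝ)⁻¹ < 1 := by norm_num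
      linarith
    have ha1 : 1 < a := by
      rw [hadef]
      exact (Real.one_lt_rpow_iff_of_pos h1e).mpr (Or.inl ⟨by linarith, by positivity⟩)
    have hb0 : 0 < b := Real.rpow_pos_of_pos h1e' _
    have hb1 : b < 1 := Real.rpow_lt_one h1e'.le (by linarith) (by positivity)
    have haM : a ^ M = 1 + e := by
      rw [hadef, ← Real.rpow_mul h1e.le, one_div_mul_cancel hM0.ne', Real.rpow_one]
    have hbM : b ^ M = 1 - e := by
      rw [hbdef, ← Real.rpow_mul h1e'.le, one_div_mul_cancel hM0.ne', Real.rpow_one]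
    obtain ⟨N, hN⟩ := hL (min (a - 1) (1 - b)) (lt_min (by linarith) (by linarith))
    refine ⟨N, fun m hm => ?_⟩
    have hNm := hN m hm
    rw [Real.dist_eq, abs_sub_lt_iff] at hNm
    have hLa : lux r s t p (xs m) < a := by
      have := hNm.1
      have h := lt_of_lt_of_le this (min_le_left (a-1) (1-b))
      linarith
    have hbL : b < lux r s t p (xs m) := by
      have := hNm.2
      have h := lt_of_lt_of_le this (min_le_right (a-1) (1-b))
      linarith
    have hup : (sigmaP r s t p (xs m)).toReal ≤ 1 + e := by
      rw [← haM]
      exact toReal_le_rpow r s t p M (xs m) hp hpM (hσ m) ha1.le hLa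
    have hlo : 1 - e ≤ (sigmaP r s t p (xs m)).toReal := by
      rw [← hbM]
      exact rpow_le_toReal r s t p M (xs m) hpM (hσ m) hb0 hb1.le hbL
    rw [Real.dist_eq, abs_sub_lt_iff]
    constructor <;> linarith
  · -- lux → 0 implies σ → 0
    intro hL
    rw [Metric.tendsto_atTop] at hL ⊢
    intro ε hε
    obtain ⟨N, hN⟩ := hL (min ε 1) (lt_min hε one_pos)
    refine ⟨N, fun m hm => ?_⟩
    have hNm := hN m hm
    rw [Real.dist_eq, sub_zero] at hNm
    have hL0 : 0 ≤ lux r s t p (xs m) := lux_nonneg r s t p (xs m)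
    rw [abs_of_nonneg hL0] at hNm
    have hL1 : lux r s t p (xs m) < 1 := lt_of_lt_of_le hNm (min_le_right _ _)
    have hS : (sigmaP r s t p (xs m)).toReal ≤ lux r s t p (xs m) :=
      toReal_le_lux r s t p (xs m) hp (hσ m) hL1
    rw [Real.dist_eq, sub_zero, abs_of_nonneg ENNReal.toReal_nonneg]
    calc (sigmaP r s t p (xs m)).toReal ≤ lux r s t p (xs m) := hS
      _ < min ε 1 := hNm
      _ ≤ ε := min_le_left _ _
  · -- σ → 0 implies lux → 0
    intro hS
    rw [Metric.tendsto_atTop] at hS ⊢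
    intro ε hε
    set e := min (ε/2) 1 with hedef
    have he0 : 0 < e := lt_min (by linarith) one_pos
    have heε : e ≤ ε/2 := min_le_left _ _
    have he1 : e ≤ 1 := min_le_right _ _
    have heM : 0 < e ^ M := Real.rpow_pos_of_pos he0 _
    obtain ⟨N, hN⟩ := hS (e ^ M) heM
    refine ⟨N, fun m hm => ?_⟩
    have hNm := hN m hm
    rw [Real.dist_eq, sub_zero, abs_of_nonneg ENNReal.toReal_nonneg] at hNm
    have hS1 : (sigmaP r s t p (xs m)).toReal ≤ 1 := by
      have heM1 : e ^ M ≤ 1 := Real.rpow_le_one he0.le he1 hM0.le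
      linarith
    have h1 : lux r s t p (xs m) ≤ ((sigmaP r s t p (xs m)).toReal) ^ (1/M) :=
      lux_le_rpow r s t p M (xs m) hp hpM (hσ m) hS1
    have h2 : ((sigmaP r s t p (xs m)).toReal) ^ (1/M) ≤ (e ^ M) ^ (1/M) :=
      Real.rpow_le_rpow ENNReal.toReal_nonneg hNm.le (by positivity)
    have h3 : (e ^ M) ^ (1/M) = e := by
      rw [← Real.rpow_mul he0.le, mul_one_div_cancel hM0.ne', Real.rpow_one]
    rw [Real.dist_eq, sub_zero, abs_of_nonneg (lux_nonneg r s t p (xs m))]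
    calc lux r s t p (xs m) ≤ ((sigmaP r s t p (xs m)).toReal) ^ (1/M) := h1
      _ ≤ (e ^ M) ^ (1/M) := h2
      _ = e := h3
      _ ≤ ε/2 := heε
      _ < ε := by linarith
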